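/- arXiv:2511.00394 — 3 statements merged into one kernel-verified Lean document; each statement's English description precedes it below -/
import Mathlib

section
/- Let q = p^n with p prime and n ≥ 1, and let G = PSL(2, F_q). Then every p-subgroup P of G whose order satisfies p ≤ |P| < p^n (equivalently, every nontrivial p-subgroup that is not a Sylow p-subgroup of G) is not pronormal in G. -/
/-- The conjugate `H^g := g⁻¹ H g` of a subgroup `H` by an element `g`. -/
def Subgroup.conjugate {G : Type*} [Group G] (H : Subgroup G) (g : G) : Subgroup G :=
  H.map (MulAut.conj g⁻¹).toMonoidHom

/-- A subgroup `H` of a group `G` is pronormal in `G` if for every `g ∈ G` there exists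
`x ∈ ⟨H, H^g⟩` such that `H^x = H^g`. -/
def IsPronormal {G : Type*} [Group G] (H : Subgroup G) : Prop :=
  ∀ g : G, ∃ x ∈ (H ⊔ H.conjugate g : Subgroup G), H.conjugate x = H.conjugate g

section Conjugate

variable {G : Type*} [Group G]

lemma mem_conjugate_iff {H : Subgroup G} {g y : G} :
    y ∈ H.conjugate g ↔ ∃ h ∈ H, g⁻¹ * h * g = y := by
  simp [Subgroup.conjugate, Subgroup.mem_map, MulAut.conj_apply]

lemma conjugate_conjugate (H : Subgroup G) (g h : G) :
    (H.conjugate g).conjugate h = H.conjugate (g * h) := by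
  unfold Subgroup.conjugate
  rw [Subgroup.map_map]
  congr 1
  ext x
  simp [MulAut.conj_apply, mul_assoc]

lemma conjugate_one (H : Subgroup G) : H.conjugate 1 = H := by
  ext x
  simp [mem_conjugate_iff]

lemma conjugate_sup (H K : Subgroup G) (g : G) :
    (H ⊔ K).conjugate g = H.conjugate g ⊔ K.conjugate g := by
  unfold Subgroup.conjugate
  exact Subgroup.map_sup _ _ _

lemma isPronormal_conjugate {H : Subgroup G} (hH : IsPronormal H) (g : G) :
    IsPronormal (H.conjugate g) := by
  intro k
  obtain ⟨x, hx, hcx⟩ := hH (g * k * g⁻¹)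
  refine ⟨g⁻¹ * x * g, ?_, ?_⟩
  · have hs : H.conjugate g ⊔ (H.conjugate g).conjugate k
        = (H ⊔ H.conjugate (g * k * g⁻¹)).conjugate g := by
      rw [conjugate_sup, conjugate_conjugate, conjugate_conjugate]
      congr 2
      group
    rw [hs]
    exact mem_conjugate_iff.mpr ⟨x, hx, rfl⟩
  · rw [conjugate_conjugate, conjugate_conjugate]
    have : g * (g⁻¹ * x * g) = x * g := by group
    rw [this]
    rw [← conjugate_conjugate, hcx, conjugate_conjugate]
    congr 1
    group

end Conjugate

section SqAddSq

open Polynomial in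
theorem my_exists_sq_add_sq (F : Type*) [Field F] [Fintype F] (x : F) :
    ∃ a b : F, a ^ 2 + b ^ 2 = x := by
  rcases Nat.even_or_odd (Fintype.card F) with he | ho
  · -- characteristic 2 : every element is a square
    have hchar : ringChar F = 2 := by
      have h1 : (ringChar F).Prime := by
        have := CharP.char_is_prime F (ringChar F)
        exact this
      obtain ⟨n, hn, hcard⟩ := FiniteField.card F (ringChar F)
      by_contra h2
      have hodd : Odd (ringChar F) := h1.odd_of_ne_two h2
      have : Odd (Fintype.card F) := by
        rw [hcard]
        exact hodd.pow
      exact (Nat.not_even_iff_odd.mpr this) he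
    obtain ⟨r, hr⟩ := FiniteField.isSquare_of_char_two hchar x
    exact ⟨r, 0, by rw [hr]; ring⟩
  · let f : F[X] := X ^ 2
    let g : F[X] := X ^ 2 - C x
    obtain ⟨a, b, hab⟩ : ∃ a b, f.eval a + g.eval b = 0 :=
      FiniteField.exists_root_sum_quadratic (degree_X_pow 2)
        (degree_X_pow_sub_C (by norm_num) _) (Nat.odd_iff.mp ho)
    refine ⟨a, b, ?_⟩
    have : a ^ 2 + (b ^ 2 - x) = 0 := by
      simpa [f, g] using hab
    linear_combination this

end SqAddSq

section Matrices

open Matrix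

variable {F : Type*} [Field F]

/-- Unitriangular matrix in SL(2,F). -/
def uMat (a : F) : Matrix.SpecialLinearGroup (Fin 2) F :=
  ⟨!![1, a; 0, 1], by simp [Matrix.det_fin_two_of]⟩

lemma uMat_coe (a : F) : (uMat a : Matrix (Fin 2) (Fin 2) F) = !![1, a; 0, 1] := rfl

lemma uMat_mul (a b : F) : uMat a * uMat b = uMat (a + b) := by
  apply Subtype.ext
  show (!![1, a; 0, 1] : Matrix (Fin 2) (Fin 2) F) * !![1, b; 0, 1] = !![1, a + b; 0, 1]
  rw [Matrix.mul_fin_two]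
  norm_num [add_comm]

lemma uMat_zero : uMat (0 : F) = 1 := by
  apply Subtype.ext
  show (!![1, (0:F); 0, 1]) = (1 : Matrix (Fin 2) (Fin 2) F)
  rw [Matrix.one_fin_two]

/-- Diagonal matrix diag(c, c⁻¹) in SL(2,F). -/
def dMat (c : F) (hc : c ≠ 0) : Matrix.SpecialLinearGroup (Fin 2) F :=
  ⟨!![c, 0; 0, c⁻¹], by simp [Matrix.det_fin_two_of, mul_inv_cancel₀ hc]⟩

lemma dMat_inv (c : F) (hc : c ≠ 0) :
    (dMat c hc)⁻¹ = dMat c⁻¹ (inv_ne_zero hc) := by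
  apply inv_eq_of_mul_eq_one_right
  apply Subtype.ext
  show (!![c, 0; 0, c⁻¹] : Matrix (Fin 2) (Fin 2) F) * !![c⁻¹, 0; 0, c⁻¹⁻¹]
      = (1 : Matrix (Fin 2) (Fin 2) F)
  rw [Matrix.mul_fin_two, Matrix.one_fin_two]
  field_simp
  simp [hc]

lemma dMat_conj (c : F) (hc : c ≠ 0) (b : F) :
    (dMat c hc)⁻¹ * uMat b * dMat c hc = uMat (c⁻¹ * b * c⁻¹) := by
  rw [dMat_inv]
  apply Subtype.ext
  show (!![c⁻¹, 0; 0, c⁻¹⁻¹] : Matrix (Fin 2) (Fin 2) F) * !![1, b; 0, 1] * !![c, 0; 0, c⁻¹]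
      = !![1, c⁻¹ * b * c⁻¹; 0, 1]
  rw [Matrix.mul_fin_two, Matrix.mul_fin_two]
  field_simp
  simp [hc]

end Matrices

section Psi

open Matrix

variable (F : Type*) [Field F]

/-- The unipotent one-parameter subgroup map into PSL(2,F). -/
def psiHom : Multiplicative F →* Matrix.ProjectiveSpecialLinearGroup (Fin 2) F where
  toFun a := QuotientGroup.mk (uMat a.toAdd)
  map_one' := by
    show (QuotientGroup.mk (uMat (0 : F)) : Matrix.ProjectiveSpecialLinearGroup (Fin 2) F) = 1
    rw [uMat_zero]
    rfl
  map_mul' a b := by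
    show (QuotientGroup.mk (uMat (a.toAdd + b.toAdd)) :
        Matrix.ProjectiveSpecialLinearGroup (Fin 2) F) = _
    rw [← uMat_mul]
    rfl

lemma psiHom_injective : Function.Injective (psiHom F) := by
  rw [injective_iff_map_eq_one]
  intro a ha
  have hc : uMat a.toAdd ∈ Subgroup.center (Matrix.SpecialLinearGroup (Fin 2) F) :=
    (QuotientGroup.eq_one_iff _).mp ha
  obtain ⟨r, -, hr⟩ := Matrix.SpecialLinearGroup.mem_center_iff.mp hc
  have h01 := congrFun (congrFun hr 0) 1
  simp [uMat_coe, Matrix.scalar_apply, Matrix.diagonal] at h01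
  have : a.toAdd = 0 := h01.symm
  simpa using this

/-- The image of the unipotent subgroup in PSL(2,F). -/
def Usub : Subgroup (Matrix.ProjectiveSpecialLinearGroup (Fin 2) F) := (psiHom F).range

lemma Usub_card [Fintype F] : Nat.card (Usub F) = Fintype.card F := by
  have e := (MonoidHom.ofInjective (psiHom_injective F)).toEquiv
  rw [Usub, ← Nat.card_congr e, Nat.card_eq_fintype_card]
  exact Fintype.card_congr Multiplicative.toAdd

lemma Usub_comm {x y : Matrix.ProjectiveSpecialLinearGroup (Fin 2) F}
    (hx : x ∈ Usub F) (hy : y ∈ Usub F) : x * y = y * x := by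
  obtain ⟨a, rfl⟩ := hx
  obtain ⟨b, rfl⟩ := hy
  rw [← _root_.map_mul, ← _root_.map_mul, mul_comm]

end Psi

section Core

open Matrix

variable {p n : ℕ} {F : Type*} [Field F] [Fintype F]

theorem core_not_pronormal (hp : p.Prime) (hF : Fintype.card F = p ^ n)
    (P : Subgroup (Matrix.ProjectiveSpecialLinearGroup (Fin 2) F))
    (hle : P ≤ Usub F) (hlo : p ≤ Nat.card P) (hhi : Nat.card P < p ^ n) :
    ¬ IsPronormal P := by
  intro hpro
  set V : Set F := {a : F | psiHom F (Multiplicative.ofAdd a) ∈ P} with hVdef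
  -- basic facts about V
  have hzero : (0 : F) ∈ V := by
    show psiHom F (Multiplicative.ofAdd (0 : F)) ∈ P
    simpa using P.one_mem
  have hadd : ∀ a ∈ V, ∀ b ∈ V, a + b ∈ V := by
    intro a ha b hb
    show psiHom F (Multiplicative.ofAdd (a + b)) ∈ P
    rw [ofAdd_add, _root_.map_mul]
    exact P.mul_mem ha hb
  -- card of P equals card of the comap
  have hW : (P.comap (psiHom F)).map (psiHom F) = P :=
    Subgroup.map_comap_eq_self (le_trans hle le_rfl)
  have hcardW : Nat.card (P.comap (psiHom F)) = Nat.card P := by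
    conv_rhs => rw [← hW]
    exact Nat.card_congr
      (Subgroup.equivMapOfInjective _ _ (psiHom_injective F)).toEquiv
  -- Step A : find a nonzero e and v ∈ V with e^2 * v ∉ V
  have hstepA : ∃ e : F, e ≠ 0 ∧ ∃ v ∈ V, e ^ 2 * v ∉ V := by
    by_contra hcl
    push_neg at hcl
    have hmulV : ∀ (c x : F), x ∈ V → c * x ∈ V := by
      intro c x hx
      obtain ⟨a, b, hab⟩ := my_exists_sq_add_sq F c
      have h1 : a ^ 2 * x ∈ V := by
        by_cases ha : a = 0
        · simpa [ha] using hzero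
        · exact hcl a ha x hx
      have h2 : b ^ 2 * x ∈ V := by
        by_cases hb : b = 0
        · simpa [hb] using hzero
        · exact hcl b hb x hx
      have : c * x = a ^ 2 * x + b ^ 2 * x := by rw [← hab]; ring
      rw [this]
      exact hadd _ h1 _ h2
    let I : Ideal F :=
      { carrier := V
        add_mem' := fun ha hb => hadd _ ha _ hb
        zero_mem' := hzero
        smul_mem' := fun c x hx => by simpa using hmulV c x hx }
    rcases I.eq_bot_or_top with hbot | htop
    · -- then P is trivial, contradicting p ≤ |P|
      have hcb : P.comap (psiHom F) = ⊥ := by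
        rw [eq_bot_iff]
        intro a ha
        have h0 : a.toAdd ∈ (I : Set F) := ha
        rw [hbot] at h0
        simp only [Ideal.mem_bot, Submodule.bot_coe, Set.mem_singleton_iff] at h0
        have ha1 : a = 1 := by
          have := congrArg Multiplicative.ofAdd h0
          simpa using this
        simp [ha1, Subgroup.mem_bot]
      rw [hcb, Subgroup.card_bot] at hcardW
      have h2 := hp.two_le
      omega
    · have hct : P.comap (psiHom F) = ⊤ := by
        rw [eq_top_iff]
        intro a _
        have : a.toAdd ∈ (I : Set F) := by rw [htop]; trivial
        exact this
      rw [hct, Subgroup.card_top, Nat.card_eq_fintype_card] at hcardW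
      have hmc : Fintype.card (Multiplicative F) = Fintype.card F :=
        Fintype.card_congr Multiplicative.toAdd
      omega
  -- Step B : conjugate by the diagonal matrix diag(e⁻¹, e)
  obtain ⟨e, he, v, hv, hnv⟩ := hstepA
  set t : Matrix.ProjectiveSpecialLinearGroup (Fin 2) F :=
    QuotientGroup.mk (dMat e⁻¹ (inv_ne_zero he)) with htdef
  have hkey : ∀ b : F, t⁻¹ * psiHom F (Multiplicative.ofAdd b) * t
      = psiHom F (Multiplicative.ofAdd (e ^ 2 * b)) := by
    intro b
    show (QuotientGroup.mk (dMat e⁻¹ (inv_ne_zero he)) :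
        Matrix.ProjectiveSpecialLinearGroup (Fin 2) F)⁻¹
        * QuotientGroup.mk (uMat b) * QuotientGroup.mk (dMat e⁻¹ (inv_ne_zero he))
        = QuotientGroup.mk (uMat (e ^ 2 * b))
    have : (dMat e⁻¹ (inv_ne_zero he))⁻¹ * uMat b * dMat e⁻¹ (inv_ne_zero he)
        = uMat (e ^ 2 * b) := by
      rw [dMat_conj]
      congr 1
      field_simp
    rw [← this]
    rfl
  have hconjle : P.conjugate t ≤ Usub F := by
    intro y hy
    obtain ⟨h, hh, rfl⟩ := mem_conjugate_iff.mp hy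
    obtain ⟨a, rfl⟩ := hle hh
    exact ⟨Multiplicative.ofAdd (e ^ 2 * a.toAdd), (hkey a.toAdd).symm⟩
  obtain ⟨x, hx, hcx⟩ := hpro t
  have hxU : x ∈ Usub F := sup_le hle hconjle hx
  have hPx : P.conjugate x = P := by
    ext b
    rw [mem_conjugate_iff]
    constructor
    · rintro ⟨h, hh, rfl⟩
      have hc : h * x = x * h := Usub_comm F (hle hh) hxU
      have heq : x⁻¹ * h * x = h := by
        rw [mul_assoc, hc, ← mul_assoc, inv_mul_cancel, one_mul]
      rw [heq]; exact hh
    · intro hb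
      refine ⟨b, hb, ?_⟩
      have hc : b * x = x * b := Usub_comm F (hle hb) hxU
      rw [mul_assoc, hc, ← mul_assoc, inv_mul_cancel, one_mul]
  rw [hPx] at hcx
  have hmem : t⁻¹ * psiHom F (Multiplicative.ofAdd v) * t ∈ P.conjugate t :=
    mem_conjugate_iff.mpr ⟨_, hv, rfl⟩
  rw [← hcx, hkey v] at hmem
  exact hnv hmem

end Core

open Pointwise in
theorem stmt8 (p n : ℕ) (hp : p.Prime) (hn : 1 ≤ n)
    (F : Type*) [Field F] [Fintype F] (hF : Fintype.card F = p ^ n)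
    (P : Subgroup (Matrix.ProjectiveSpecialLinearGroup (Fin 2) F))
    (hPp : IsPGroup p P) (hlo : p ≤ Nat.card P) (hhi : Nat.card P < p ^ n) :
    ¬ IsPronormal P := by
  haveI : Fact p.Prime := ⟨hp⟩
  haveI : Finite (Matrix.SpecialLinearGroup (Fin 2) F) := Subtype.finite
  haveI : Finite (Matrix.ProjectiveSpecialLinearGroup (Fin 2) F) := Quotient.finite _
  set q := p ^ n with hqdef
  have hq2 : 2 ≤ q := by
    calc 2 ≤ p := hp.two_le
    _ = p ^ 1 := (pow_one p).symm
    _ ≤ p ^ n := Nat.pow_le_pow_right hp.pos hn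
  have hqq : q ≤ q ^ 2 := Nat.le_self_pow two_ne_zero q
  have hGLcard : Nat.card (GL (Fin 2) F) = (q ^ 2 - 1) * (q ^ 2 - q) := by
    rw [Matrix.card_GL_field, Fin.prod_univ_two]
    simp [hF]
  have hSL_dvd : Nat.card (Matrix.SpecialLinearGroup (Fin 2) F) ∣ Nat.card (GL (Fin 2) F) := by
    apply Subgroup.card_dvd_of_injective Matrix.SpecialLinearGroup.toGL
    intro A B h
    apply Subtype.ext
    have := congrArg (fun u : GL (Fin 2) F => (u : Matrix (Fin 2) (Fin 2) F)) h
    simpa using this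
  have hPSL_dvd : Nat.card (Matrix.ProjectiveSpecialLinearGroup (Fin 2) F)
      ∣ Nat.card (Matrix.SpecialLinearGroup (Fin 2) F) :=
    ⟨Nat.card (Subgroup.center (Matrix.SpecialLinearGroup (Fin 2) F)),
      Subgroup.card_eq_card_quotient_mul_card_subgroup _⟩
  have hdvd : Nat.card (Matrix.ProjectiveSpecialLinearGroup (Fin 2) F)
      ∣ (q ^ 2 - 1) * (q ^ 2 - q) := hGLcard ▸ hPSL_dvd.trans hSL_dvd
  have hUcard : Nat.card (Usub F) = q := by rw [Usub_card, hF]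
  have hUdvd : q ∣ Nat.card (Matrix.ProjectiveSpecialLinearGroup (Fin 2) F) :=
    hUcard ▸ Subgroup.card_subgroup_dvd_card (Usub F)
  have hG0 : Nat.card (Matrix.ProjectiveSpecialLinearGroup (Fin 2) F) ≠ 0 :=
    Nat.card_pos.ne'
  have hq0 : q ≠ 0 := by omega
  have hM0 : (q ^ 2 - 1) * (q - 1) ≠ 0 := by
    have : 2 ≤ q ^ 2 := le_trans hq2 hqq
    apply mul_ne_zero <;> omega
  have hfact : (Nat.card (Matrix.ProjectiveSpecialLinearGroup (Fin 2) F)).factorization p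
      = n := by
    have hsplit : (q ^ 2 - 1) * (q ^ 2 - q) = ((q ^ 2 - 1) * (q - 1)) * q := by
      have h1 : q ^ 2 - q = q * (q - 1) := by
        zify [hqq, show 1 ≤ q by omega]
        ring
      rw [h1]; ring
    have hub : Nat.card (Matrix.ProjectiveSpecialLinearGroup (Fin 2) F)
        ∣ ((q ^ 2 - 1) * (q - 1)) * q := hsplit ▸ hdvd
    have hMp : ¬ p ∣ (q ^ 2 - 1) * (q - 1) := by
      intro hd
      have hpq : p ∣ q := dvd_pow_self p (by omega)
      have hq2' : 2 ≤ q ^ 2 := le_trans hq2 hqq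
      rcases (Nat.Prime.dvd_mul hp).mp hd with h1 | h2
      · have hpq2 : p ∣ q ^ 2 := hpq.trans (dvd_pow_self q two_ne_zero)
        have hone := Nat.dvd_sub hpq2 h1
        rw [show q ^ 2 - (q ^ 2 - 1) = 1 by omega] at hone
        have := Nat.le_of_dvd one_pos hone
        have := hp.two_le
        omega
      · have hone := Nat.dvd_sub hpq h2
        rw [show q - (q - 1) = 1 by omega] at hone
        have := Nat.le_of_dvd one_pos hone
        have := hp.two_le
        omega
    have hl : n ≤ (Nat.card (Matrix.ProjectiveSpecialLinearGroup (Fin 2) F)).factorization p :=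
      (Nat.Prime.pow_dvd_iff_le_factorization hp hG0).mp hUdvd
    have hle2 := (Nat.factorization_le_iff_dvd hG0 (mul_ne_zero hM0 hq0)).mpr hub
    have h2 := Finsupp.le_def.mp hle2 p
    rw [Nat.factorization_mul hM0 hq0] at h2
    have hMzero : ((q ^ 2 - 1) * (q - 1)).factorization p = 0 :=
      Nat.factorization_eq_zero_of_not_dvd hMp
    have hqf : q.factorization p = n := by
      rw [hqdef, hp.factorization_pow, Finsupp.single_eq_same]
    rw [Finsupp.add_apply, hMzero, hqf, zero_add] at h2
    omega
  -- the unipotent subgroup is a Sylow p-subgroup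
  let S : Sylow p (Matrix.ProjectiveSpecialLinearGroup (Fin 2) F) :=
    Sylow.ofCard (Usub F) (by rw [hUcard, hfact])
  obtain ⟨R, hPR⟩ := hPp.exists_le_sylow
  obtain ⟨g, hg⟩ := MulAction.exists_smul_eq (Matrix.ProjectiveSpecialLinearGroup (Fin 2) F) S R
  have hconjle : P.conjugate g ≤ Usub F := by
    intro y hy
    obtain ⟨h, hh, rfl⟩ := mem_conjugate_iff.mp hy
    have hhR : h ∈ R := hPR hh
    rw [← hg] at hhR
    have hmem : h ∈ MulAut.conj g • (S : Subgroup (Matrix.ProjectiveSpecialLinearGroup (Fin 2) F)) := hhR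
    rw [Subgroup.mem_pointwise_smul_iff_inv_smul_mem] at hmem
    have : (MulAut.conj g)⁻¹ • h = g⁻¹ * h * g := by
      rw [← map_inv, MulAut.smul_def, MulAut.conj_apply]
      group
    rw [this] at hmem
    exact hmem
  have hcardconj : Nat.card (P.conjugate g) = Nat.card P :=
    (Nat.card_congr (Subgroup.equivMapOfInjective P _
      (MulAut.conj g⁻¹).injective).toEquiv).symm
  intro hpro
  exact core_not_pronormal hp hF (P.conjugate g) hconjle
    (by rw [hcardconj]; exact hlo) (by rw [hcardconj]; exact hhi)
    (isPronormal_conjugate hpro g)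
end

section
/- Let q = p^n with p prime, let G = PSL(2, F_q), and let p' be a prime divisor of |G| with p' ≠ p and p' ≠ 2. Then every subgroup of G whose order is a power of p' (in particular, every cyclic subgroup of order p'^i for 1 ≤ i ≤ v_{p'}(|G|)) is pronormal in G. -/
namespace Pron

variable {G : Type*} [Group G]

lemma conjugate_conjugate (H : Subgroup G) (a b : G) :
    (H.conjugate a).conjugate b = H.conjugate (a * b) := by
  simp only [Subgroup.conjugate, Subgroup.map_map]
  congr 1
  ext x
  simp [mul_assoc]

lemma conjugate_one (H : Subgroup G) : H.conjugate 1 = H := by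
  simp only [Subgroup.conjugate, inv_one]
  ext x
  simp

lemma card_conjugate (H : Subgroup G) (g : G) : Nat.card (H.conjugate g) = Nat.card H :=
  (Nat.card_congr (Subgroup.equivMapOfInjective H _ (MulAut.conj g⁻¹).injective).toEquiv).symm

lemma conjugate_le_conjugate {H K : Subgroup G} (h : H ≤ K) (g : G) :
    H.conjugate g ≤ K.conjugate g := Subgroup.map_mono h

lemma conjugate_map (H : Subgroup G) (g : G) :
    H.conjugate g = H.map (MulAut.conj g⁻¹).toMonoidHom := rfl

/-- In a finite cyclic group, subgroups of equal cardinality are equal. -/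
lemma cyclic_subgroup_unique {α : Type*} [Group α] [Finite α] [IsCyclic α]
    {H K : Subgroup α} (h : Nat.card H = Nat.card K) : H = K := by
  classical
  cases nonempty_fintype α
  set m := Nat.card H with hm
  have hm0 : 0 < m := Nat.card_pos
  have key : ∀ L : Subgroup α, Nat.card L = m →
      (Finset.univ.filter (· ∈ L)) = (Finset.univ.filter fun a : α => a ^ m = 1) := by
    intro L hL
    apply Finset.eq_of_subset_of_card_le
    · intro x hx
      simp only [Finset.mem_filter, Finset.mem_univ, true_and] at hx ⊢
      have : (⟨x, hx⟩ : L) ^ m = 1 := by rw [← hL, pow_card_eq_one']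
      simpa [Subtype.ext_iff] using this
    · calc (Finset.univ.filter fun a : α => a ^ m = 1).card ≤ m :=
            IsCyclic.card_pow_eq_one_le hm0
        _ = (Finset.univ.filter (· ∈ L)).card := by
            rw [← hL, Nat.card_eq_fintype_card, Fintype.card_subtype]
  have h1 := key H rfl
  have h2 := key K h.symm
  ext x
  have h3 := h1.trans h2.symm
  rw [Finset.ext_iff] at h3
  simpa using h3 x

/-- Subgroups of a finite cyclic subgroup with equal cardinality are equal. -/
lemma eq_of_le_cyclic_of_card_eq {C H K : Subgroup G} [Finite C] (hC : IsCyclic C)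
    (hH : H ≤ C) (hK : K ≤ C) (h : Nat.card H = Nat.card K) : H = K := by
  have hcard : Nat.card (H.subgroupOf C) = Nat.card (K.subgroupOf C) := by
    rw [Nat.card_congr (Subgroup.subgroupOfEquivOfLe hH).toEquiv,
      Nat.card_congr (Subgroup.subgroupOfEquivOfLe hK).toEquiv, h]
  have := cyclic_subgroup_unique hcard
  have := congrArg (Subgroup.map C.subtype) this
  rwa [Subgroup.subgroupOf_map_subtype, Subgroup.subgroupOf_map_subtype,
    inf_eq_left.mpr hH, inf_eq_left.mpr hK] at this


lemma mem_conjugate {H : Subgroup G} {g x : G} :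
    x ∈ H.conjugate g ↔ g * x * g⁻¹ ∈ H := by
  simp only [Subgroup.conjugate, Subgroup.mem_map, MulEquiv.coe_toMonoidHom, MulAut.conj_apply]
  constructor
  · rintro ⟨h, hh, rfl⟩
    simpa [mul_assoc] using hh
  · intro hx
    exact ⟨g * x * g⁻¹, hx, by group⟩

lemma conjugate_map_subtype {K : Subgroup G} (A : Subgroup K) (c : K) :
    (A.conjugate c).map K.subtype = (A.map K.subtype).conjugate (c : G) := by
  have hcomp : (MulAut.conj ((c : G))⁻¹).toMonoidHom.comp K.subtype
      = K.subtype.comp (MulAut.conj c⁻¹).toMonoidHom := by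
    ext x
    simp [mul_assoc]
  rw [Subgroup.conjugate, Subgroup.conjugate, Subgroup.map_map, Subgroup.map_map, hcomp]

open Pointwise in
lemma pointwise_conj_smul_eq_conjugate {A : Subgroup G} {k : G} :
    MulAut.conj k • A = A.conjugate k⁻¹ := by
  ext x
  rw [Subgroup.mem_pointwise_smul_iff_inv_smul_mem, mem_conjugate]
  simp [mul_assoc]

theorem pronormal_of_cyclic_sylow {r : ℕ} [Finite G] [hr : Fact r.Prime]
    (hSyl : ∀ P : Sylow r G, IsCyclic P)
    {H : Subgroup G} (hH : IsPGroup r H) : IsPronormal H := by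
  haveI : Finite (Sylow r G) :=
    Finite.of_injective (fun P : Sylow r G => (P : Subgroup G)) fun P Q h => Sylow.ext h
  intro g
  have hHK : H ≤ H ⊔ H.conjugate g := le_sup_left
  have hHgK : H.conjugate g ≤ H ⊔ H.conjugate g := le_sup_right
  obtain ⟨S, hS⟩ := (hH.comap_subtype (K := H ⊔ H.conjugate g)).exists_le_sylow
  obtain ⟨T, hT⟩ :=
    ((hH.map _ : IsPGroup r (H.conjugate g)).comap_subtype
      (K := H ⊔ H.conjugate g)).exists_le_sylow
  obtain ⟨k, hk⟩ := MulAction.exists_smul_eq (↥(H ⊔ H.conjugate g)) S T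
  have hHS' : H ≤ (S : Subgroup ↥(H ⊔ H.conjugate g)).map (H ⊔ H.conjugate g).subtype := by
    have := Subgroup.map_mono (f := (H ⊔ H.conjugate g).subtype) hS
    rwa [Subgroup.map_comap_eq, Subgroup.range_subtype, inf_eq_right.mpr hHK] at this
  have hT1 : (T : Subgroup ↥(H ⊔ H.conjugate g))
      = (S : Subgroup ↥(H ⊔ H.conjugate g)).conjugate k⁻¹ := by
    rw [← hk, Sylow.coe_subgroup_smul, pointwise_conj_smul_eq_conjugate]
  have hHgT' : H.conjugate g ≤
      (((S : Subgroup ↥(H ⊔ H.conjugate g)).map (H ⊔ H.conjugate g).subtype).conjugate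
        ((k : G))⁻¹) := by
    have := Subgroup.map_mono (f := (H ⊔ H.conjugate g).subtype) hT
    rw [← conjugate_map H g] at this
    rwa [Subgroup.map_comap_eq, Subgroup.range_subtype, inf_eq_right.mpr hHgK, hT1,
      conjugate_map_subtype] at this
  have hHgk : (H.conjugate g).conjugate (k : G) ≤
      (S : Subgroup ↥(H ⊔ H.conjugate g)).map (H ⊔ H.conjugate g).subtype := by
    refine le_trans (conjugate_le_conjugate hHgT' (k : G)) (le_of_eq ?_)
    rw [conjugate_conjugate, inv_mul_cancel, conjugate_one]
  obtain ⟨P₁, hP₁⟩ := (S.2.map (H ⊔ H.conjugate g).subtype).exists_le_sylow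
  have hcyc : IsCyclic (P₁ : Subgroup G) := hSyl P₁
  have heq : H = (H.conjugate g).conjugate (k : G) := by
    refine eq_of_le_cyclic_of_card_eq hcyc (hHS'.trans hP₁) (hHgk.trans hP₁) ?_
    rw [card_conjugate, card_conjugate]
  refine ⟨(k : G)⁻¹, (H ⊔ H.conjugate g).inv_mem k.2, ?_⟩
  calc H.conjugate (k : G)⁻¹
      = ((H.conjugate g).conjugate (k : G)).conjugate (k : G)⁻¹ := by rw [← heq]
    _ = H.conjugate g := by
        rw [conjugate_conjugate, conjugate_conjugate]
        simp

end Pron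

section Merged
open Matrix Polynomial

namespace Pron3

lemma card_ker_mul_card_range {A B : Type*} [Group A] [Group B] [Finite A] (f : A →* B) :
    Nat.card f.ker * Nat.card f.range = Nat.card A := by
  rw [Subgroup.card_eq_card_quotient_mul_card_subgroup f.ker,
    Nat.card_congr (QuotientGroup.quotientKerEquivRange f).toEquiv, mul_comm]

variable {F : Type*} [Field F] [Fintype F]

noncomputable def slEquivKerDet :
    SpecialLinearGroup (Fin 2) F ≃* (Matrix.GeneralLinearGroup.det (n := Fin 2) (R := F)).ker where
  toFun A := ⟨Matrix.SpecialLinearGroup.toGL A, by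
    rw [MonoidHom.mem_ker]
    ext
    simp [Matrix.GeneralLinearGroup.val_det_apply, A.2]⟩
  invFun x := ⟨((x : GL (Fin 2) F) : Matrix (Fin 2) (Fin 2) F), by
    have h := x.2
    rw [MonoidHom.mem_ker] at h
    have h2 := congrArg Units.val h
    simpa [Matrix.GeneralLinearGroup.val_det_apply] using h2⟩
  left_inv A := by ext : 2; rfl
  right_inv x := by ext : 3; rfl
  map_mul' A B := by ext : 3; rfl

lemma det_surjective :
    Function.Surjective (Matrix.GeneralLinearGroup.det (n := Fin 2) (R := F)) := by
  intro u
  have hmul : Matrix.diagonal ![(u : F), 1] * Matrix.diagonal ![((u⁻¹ : Fˣ) : F), 1]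
      = 1 := by
    rw [Matrix.diagonal_mul_diagonal]
    ext i j
    fin_cases i <;> fin_cases j <;> simp [Matrix.diagonal]
  have hmul' : Matrix.diagonal ![((u⁻¹ : Fˣ) : F), 1] * Matrix.diagonal ![(u : F), 1]
      = 1 := by
    rw [Matrix.diagonal_mul_diagonal]
    ext i j
    fin_cases i <;> fin_cases j <;> simp [Matrix.diagonal]
  refine ⟨⟨Matrix.diagonal ![(u : F), 1], Matrix.diagonal ![((u⁻¹ : Fˣ) : F), 1],
    hmul, hmul'⟩, ?_⟩
  ext
  simp [Matrix.GeneralLinearGroup.val_det_apply, Matrix.det_diagonal, Fin.prod_univ_two]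

lemma card_SL : Nat.card (SpecialLinearGroup (Fin 2) F)
    = Fintype.card F * (Fintype.card F - 1) * (Fintype.card F + 1) := by
  have hq2 : 2 ≤ Fintype.card F := Fintype.one_lt_card
  set q := Fintype.card F with hq
  have hGL : Nat.card (GL (Fin 2) F) = (q ^ 2 - 1) * (q ^ 2 - q) := by
    rw [Matrix.card_GL_field, Fin.prod_univ_two]
    norm_num
    rfl
  have h1 : Nat.card (SpecialLinearGroup (Fin 2) F)
      = Nat.card (Matrix.GeneralLinearGroup.det (n := Fin 2) (R := F)).ker :=
    Nat.card_congr (slEquivKerDet).toEquiv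
  have h2 := card_ker_mul_card_range (Matrix.GeneralLinearGroup.det (n := Fin 2) (R := F))
  have h3 : (Matrix.GeneralLinearGroup.det (n := Fin 2) (R := F)).range = ⊤ :=
    MonoidHom.range_eq_top.mpr det_surjective
  rw [h3] at h2
  have h4 : Nat.card ((⊤ : Subgroup Fˣ)) = q - 1 := by
    rw [Nat.card_congr Subgroup.topEquiv.toEquiv, Nat.card_units, Nat.card_eq_fintype_card]
  rw [h4, hGL] at h2
  have hkey : Nat.card (SpecialLinearGroup (Fin 2) F) * (q - 1)
      = (q * (q - 1) * (q + 1)) * (q - 1) := by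
    rw [h1, h2]
    have e1 : 1 ≤ q ^ 2 := by nlinarith
    have e2 : q ≤ q ^ 2 := by nlinarith
    have e3 : 1 ≤ q := by omega
    zify [e1, e2, e3]
    ring
  exact Nat.eq_of_mul_eq_mul_right (by omega) hkey

end Pron3

namespace Pron4

lemma card_ker_mul_card_range {A B : Type*} [Group A] [Group B] [Finite A] (f : A →* B) :
    Nat.card f.ker * Nat.card f.range = Nat.card A := by
  rw [Subgroup.card_eq_card_quotient_mul_card_subgroup f.ker,
    Nat.card_congr (QuotientGroup.quotientKerEquivRange f).toEquiv, mul_comm]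

lemma card_dvd_two_of_sq {A : Type*} [Group A] [Finite A] [IsCyclic A]
    (h : ∀ x : A, x ^ 2 = 1) : Nat.card A ∣ 2 := by
  obtain ⟨g, hg⟩ := IsCyclic.exists_ofOrder_eq_natCard (α := A)
  rw [← hg]
  exact orderOf_dvd_of_pow_eq_one (h g)

variable (F : Type*) [Field F] [Fintype F]

noncomputable def dHom : Fˣ →* SpecialLinearGroup (Fin 2) F where
  toFun a := ⟨Matrix.diagonal ![(a : F), ((a⁻¹ : Fˣ) : F)], by
    simp [Matrix.det_diagonal, Fin.prod_univ_two]⟩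
  map_one' := by
    apply Subtype.ext
    simp only [Units.val_one, inv_one]
    ext i j
    fin_cases i <;> fin_cases j <;> simp [Matrix.diagonal]
  map_mul' a b := by
    apply Subtype.ext
    show Matrix.diagonal _ = Matrix.diagonal _ * Matrix.diagonal _
    rw [Matrix.diagonal_mul_diagonal]
    ext i j
    fin_cases i <;> fin_cases j <;> simp [Matrix.diagonal, mul_comm]

noncomputable def psiA : Fˣ →* Matrix.ProjectiveSpecialLinearGroup (Fin 2) F :=
  (QuotientGroup.mk' (Subgroup.center _)).comp (dHom F)

lemma sq_eq_one_of_mem_ker_psiA {a : Fˣ} (ha : a ∈ (psiA F).ker) : a ^ 2 = 1 := by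
  rw [psiA, MonoidHom.mem_ker, MonoidHom.comp_apply, QuotientGroup.mk'_apply,
    QuotientGroup.eq_one_iff] at ha
  rw [Matrix.SpecialLinearGroup.mem_center_iff] at ha
  obtain ⟨s, hs2, hsA⟩ := ha
  have h00 : s = (a : F) := by
    have := congrFun (congrFun (congrArg (fun M : Matrix (Fin 2) (Fin 2) F => M) hsA) 0) 0
    have e : ((dHom F a : SpecialLinearGroup (Fin 2) F) : Matrix (Fin 2) (Fin 2) F) 0 0 = (a : F) :=
      Matrix.diagonal_apply_eq _ 0
    simpa [Matrix.scalar_apply, e] using this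
  apply Units.ext
  push_cast
  rw [← h00]
  simpa using hs2

lemma exists_cyclic_subgroup_split :
    ∃ C : Subgroup (Matrix.ProjectiveSpecialLinearGroup (Fin 2) F), IsCyclic C ∧
      ∃ k : ℕ, k ∣ 2 ∧ Nat.card C * k = Fintype.card F - 1 := by
  refine ⟨(psiA F).range, isCyclic_of_surjective (psiA F).rangeRestrict
    (psiA F).rangeRestrict_surjective, Nat.card (psiA F).ker, ?_, ?_⟩
  · apply card_dvd_two_of_sq
    intro x
    apply Subtype.ext
    push_cast
    exact sq_eq_one_of_mem_ker_psiA F x.2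
  · rw [mul_comm, card_ker_mul_card_range (psiA F), Nat.card_units, Nat.card_eq_fintype_card]

end Pron4

namespace Pron5

lemma card_ker_mul_card_range {A B : Type*} [Group A] [Group B] [Finite A] (f : A →* B) :
    Nat.card f.ker * Nat.card f.range = Nat.card A := by
  rw [Subgroup.card_eq_card_quotient_mul_card_subgroup f.ker,
    Nat.card_congr (QuotientGroup.quotientKerEquivRange f).toEquiv, mul_comm]

lemma card_dvd_two_of_sq {A : Type*} [Group A] [Finite A] [IsCyclic A]
    (h : ∀ x : A, x ^ 2 = 1) : Nat.card A ∣ 2 := by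
  obtain ⟨g, hg⟩ := IsCyclic.exists_ofOrder_eq_natCard (α := A)
  rw [← hg]
  exact orderOf_dvd_of_pow_eq_one (h g)

variable {F : Type*} [Field F] [Fintype F]

lemma irreducible_quadratic_aux (bb c : F) (h : ∀ x : F, x ^ 2 + bb * x + c ≠ 0) :
    ∃ f : Polynomial F, f.Monic ∧ f.natDegree = 2 ∧ Irreducible f := by
  refine ⟨X ^ 2 + (C bb * X + C c), ?_, ?_, ?_⟩
  · exact monic_X_pow_add (lt_of_le_of_lt (degree_linear_le) (by norm_num))
  · have hdeg : (X ^ 2 + (C bb * X + C c) : Polynomial F).degree = 2 := by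
      rw [degree_add_eq_left_of_degree_lt]
      · exact degree_X_pow 2
      · rw [degree_X_pow]
        exact lt_of_le_of_lt (degree_linear_le) (by norm_num)
    exact natDegree_eq_of_degree_eq_some hdeg
  · have hmonic : (X ^ 2 + (C bb * X + C c) : Polynomial F).Monic :=
      monic_X_pow_add (lt_of_le_of_lt (degree_linear_le) (by norm_num))
    have hdeg2 : (X ^ 2 + (C bb * X + C c) : Polynomial F).natDegree = 2 := by
      have hdeg : (X ^ 2 + (C bb * X + C c) : Polynomial F).degree = 2 := by
        rw [degree_add_eq_left_of_degree_lt]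
        · exact degree_X_pow 2
        · rw [degree_X_pow]
          exact lt_of_le_of_lt (degree_linear_le) (by norm_num)
      exact natDegree_eq_of_degree_eq_some hdeg
    rw [hmonic.irreducible_iff_roots_eq_zero_of_degree_le_three (by omega) (by omega)]
    rw [Multiset.eq_zero_iff_forall_notMem]
    intro x hx
    rw [mem_roots hmonic.ne_zero] at hx
    have := hx
    rw [IsRoot, eval_add, eval_add, eval_pow, eval_X, eval_mul, eval_C, eval_X, eval_C] at this
    exact h x (by linear_combination this)

lemma exists_irreducible_quadratic :
    ∃ f : Polynomial F, f.Monic ∧ f.natDegree = 2 ∧ Irreducible f := by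
  by_cases h2 : ringChar F = 2
  · haveI : CharP F 2 := h2 ▸ ringChar.charP F
    have hnsurj : ¬ Function.Surjective (fun t : F => t ^ 2 + t) := by
      intro hsurj
      have hinj := (Finite.injective_iff_surjective).mpr hsurj
      have : (0 : F) = 1 := by
        apply hinj
        show (0:F) ^ 2 + 0 = 1 ^ 2 + 1
        rw [one_pow, CharTwo.add_self_eq_zero]
        simp
      exact zero_ne_one this
    rw [Function.Surjective] at hnsurj
    push_neg at hnsurj
    obtain ⟨c, hc⟩ := hnsurj

    apply irreducible_quadratic_aux 1 c
    intro x hx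
    apply hc x
    show x ^ 2 + x = c
    have : x ^ 2 + x = -c := by linear_combination hx
    rw [this, CharTwo.neg_eq]
  · obtain ⟨ε, hε⟩ := FiniteField.exists_nonsquare h2
    apply irreducible_quadratic_aux 0 (-ε)
    intro x hx
    apply hε
    refine ⟨x, ?_⟩
    have : x ^ 2 = ε := by linear_combination hx
    rw [← this]
    ring

end Pron5

namespace Pron5B
variable {F : Type*} [Field F] [Fintype F]

lemma exists_cyclic_subgroup_nonsplit :
    ∃ C : Subgroup (Matrix.ProjectiveSpecialLinearGroup (Fin 2) F), IsCyclic C ∧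
      ∃ k1 k2 : ℕ, k1 ∣ 2 ∧ k2 ∣ (Fintype.card F - 1) ∧
        Nat.card C * (k1 * k2) = Fintype.card F ^ 2 - 1 := by
  classical
  obtain ⟨f, hmonic, hdeg, hirr⟩ := Pron5.exists_irreducible_quadratic (F := F)
  haveI : Fact (Irreducible f) := ⟨hirr⟩
  have hf0 : f ≠ 0 := hmonic.ne_zero
  set K := AdjoinRoot f with hK
  let pb : PowerBasis F K := AdjoinRoot.powerBasis hf0
  haveI : Module.Finite F K := pb.finite
  let b : Module.Basis (Fin 2) F K := pb.basis.reindex (finCongr (by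
    show f.natDegree = 2
    exact hdeg))
  haveI : Finite K := Finite.of_equiv (Fin 2 → F) b.equivFun.toEquiv.symm
  haveI : Fintype K := Fintype.ofFinite K
  have hcardK : Fintype.card K = Fintype.card F ^ 2 := by
    rw [Module.card_eq_pow_finrank (K := F) (V := K), pb.finrank]
    show Fintype.card F ^ f.natDegree = _
    rw [hdeg]
  set ν : Kˣ →* Fˣ := Units.map (Algebra.norm F : K →* F) with hν
  have hnorm1 : ∀ u : ν.ker, Algebra.norm F (((u : Kˣ) : K)) = 1 := by
    intro u
    have h := u.2
    rw [MonoidHom.mem_ker] at h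
    have h2 := congrArg Units.val h
    simpa [hν] using h2
  let θ : ν.ker →* SpecialLinearGroup (Fin 2) F := {
    toFun := fun u => ⟨Algebra.leftMulMatrix b ((u : Kˣ) : K), by
      rw [← Algebra.norm_eq_matrix_det b, hnorm1 u]⟩
    map_one' := by
      apply Subtype.ext
      push_cast
      simp
    map_mul' := fun u v => by
      apply Subtype.ext
      push_cast
      simp
      rfl }
  have halg : ∀ s : F, Algebra.leftMulMatrix b (algebraMap F K s) = Matrix.scalar (Fin 2) s := by
    intro s
    ext i j
    rw [Algebra.leftMulMatrix_eq_repr_mul, ← Algebra.smul_def]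
    simp [Module.Basis.repr_self, Finsupp.single_apply, Matrix.scalar_apply, Matrix.diagonal_apply,
      eq_comm]
  set ψ : ν.ker →* Matrix.ProjectiveSpecialLinearGroup (Fin 2) F :=
    (QuotientGroup.mk' (Subgroup.center (SpecialLinearGroup (Fin 2) F))).comp θ with hψ
  have hker' : ∀ y : ν.ker, ψ y = 1 → ((y : Kˣ) : K) ^ 2 = 1 := by
    intro y h
    rw [hψ, MonoidHom.comp_apply, QuotientGroup.mk'_apply,
      QuotientGroup.eq_one_iff, Matrix.SpecialLinearGroup.mem_center_iff] at h
    obtain ⟨s, hs2, hsA⟩ := h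
    rw [Fintype.card_fin] at hs2
    have hmat : Algebra.leftMulMatrix b (algebraMap F K s)
        = Algebra.leftMulMatrix b ((y : Kˣ) : K) := by
      rw [halg s]
      exact hsA
    have hx : algebraMap F K s = ((y : Kˣ) : K) :=
      Algebra.leftMulMatrix_injective b hmat
    rw [← hx, ← map_pow, hs2]
    exact map_one (algebraMap F K)
  have hker : ∀ x : ψ.ker, x ^ 2 = 1 := by
    intro x
    have hx := hker' (x : ν.ker) (MonoidHom.mem_ker.mp x.2)
    apply Subtype.ext
    apply Subtype.ext
    apply Units.ext
    push_cast
    exact hx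
  refine ⟨ψ.range, isCyclic_of_surjective ψ.rangeRestrict ψ.rangeRestrict_surjective,
    Nat.card ψ.ker, Nat.card ν.range, Pron5.card_dvd_two_of_sq hker, ?_, ?_⟩
  · have h5 := Subgroup.card_subgroup_dvd_card ν.range
    have h6 : Nat.card Fˣ = Fintype.card F - 1 := by
      rw [Nat.card_eq_fintype_card, Fintype.card_units]
    rwa [h6] at h5
  · have h1 : Nat.card ψ.ker * Nat.card ψ.range = Nat.card ν.ker :=
      Pron5.card_ker_mul_card_range ψ
    have h2 : Nat.card ν.ker * Nat.card ν.range = Fintype.card F ^ 2 - 1 := by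
      rw [Pron5.card_ker_mul_card_range ν, Nat.card_units, Nat.card_eq_fintype_card, hcardK]
    calc Nat.card ψ.range * (Nat.card ψ.ker * Nat.card ν.range)
        = (Nat.card ψ.ker * Nat.card ψ.range) * Nat.card ν.range := by ring
      _ = Fintype.card F ^ 2 - 1 := by rw [h1, h2]

end Pron5B

end Merged
section Glue

namespace PronGlue

lemma factorization_le_of_dvd {a b : ℕ} (r : ℕ) (ha : a ≠ 0) (hb : b ≠ 0) (h : a ∣ b) :
    a.factorization r ≤ b.factorization r :=
  Finsupp.le_def.mp ((Nat.factorization_le_iff_dvd ha hb).mpr h) r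

lemma pow_factorization_dvd_of_mul_eq {r a k m : ℕ} (hm : m ≠ 0)
    (h : a * k = m) (hk : ¬ r ∣ k) : r ^ m.factorization r ∣ a := by
  have ha : a ≠ 0 := by rintro rfl; simp at h; omega
  have hk0 : k ≠ 0 := by rintro rfl; simp at h; omega
  have hfac : m.factorization r = a.factorization r := by
    rw [← h, Nat.factorization_mul ha hk0, Finsupp.add_apply,
      Nat.factorization_eq_zero_of_not_dvd hk, add_zero]
  rw [hfac]
  exact Nat.ordProj_dvd a r

lemma cyclic_sylow_of_cyclic_subgroup {G : Type*} [Group G] [Finite G] {r : ℕ} [hr : Fact r.Prime]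
    {C : Subgroup G} (hC : IsCyclic C)
    (hdvd : r ^ (Nat.card G).factorization r ∣ Nat.card C) :
    ∀ P : Sylow r G, IsCyclic P := by
  haveI : Finite (Sylow r G) :=
    Finite.of_injective (fun P : Sylow r G => (P : Subgroup G)) fun P Q h => Sylow.ext h
  obtain ⟨S⟩ : Nonempty (Sylow r ↥C) := Sylow.nonempty
  have hC0 : Nat.card C ≠ 0 := Nat.card_pos.ne'
  have hG0 : Nat.card G ≠ 0 := Nat.card_pos.ne'
  have hfeq : (Nat.card C).factorization r = (Nat.card G).factorization r := by
    refine le_antisymm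
      (factorization_le_of_dvd r hC0 hG0 (Subgroup.card_subgroup_dvd_card C)) ?_
    exact (Nat.Prime.pow_dvd_iff_le_factorization hr.out hC0).mp hdvd
  have hcardS : Nat.card ((S : Subgroup ↥C).map C.subtype)
      = r ^ (Nat.card G).factorization r := by
    rw [Nat.card_congr (Subgroup.equivMapOfInjective _ _ C.subtype_injective).toEquiv.symm,
      S.card_eq_multiplicity, hfeq]
  obtain ⟨P0, hP0⟩ := (S.2.map C.subtype).exists_le_sylow
  have hcardP0 : Nat.card P0 = r ^ (Nat.card G).factorization r := P0.card_eq_multiplicity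
  have heq : (S : Subgroup ↥C).map C.subtype = (P0 : Subgroup G) :=
    Subgroup.eq_of_le_of_card_ge hP0 (le_of_eq (by rw [hcardP0, hcardS]))
  haveI : IsCyclic C := hC
  have hcycS : IsCyclic ((S : Subgroup ↥C).map C.subtype) :=
    Pron.eq_of_le_cyclic_of_card_eq (C := C) hC (Subgroup.map_subtype_le _)
      (Subgroup.map_subtype_le _) rfl ▸
      (isCyclic_of_surjective (Subgroup.subgroupOfEquivOfLe
        (Subgroup.map_subtype_le (S : Subgroup ↥C))).toMonoidHom
        (Subgroup.subgroupOfEquivOfLe _).surjective)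
  have hcycP0 : IsCyclic (P0 : Subgroup G) := heq ▸ hcycS
  intro P
  haveI := hcycP0
  exact isCyclic_of_surjective (Sylow.equiv P0 P).toMonoidHom (Sylow.equiv P0 P).surjective

end PronGlue

end Glue
theorem stmt9 (p n p' : ℕ) (hp : p.Prime) (hp' : p'.Prime)
    (F : Type*) [Field F] [Fintype F] (hF : Fintype.card F = p ^ n)
    (hdvd : p' ∣ Nat.card (Matrix.ProjectiveSpecialLinearGroup (Fin 2) F))
    (hne : p' ≠ p) (hne2 : p' ≠ 2)
    (H : Subgroup (Matrix.ProjectiveSpecialLinearGroup (Fin 2) F))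
    (hH : ∃ i : ℕ, Nat.card H = p' ^ i) :
    IsPronormal H := by
  classical
  haveI : Fact p'.Prime := ⟨hp'⟩
  haveI hfin : Finite (Matrix.ProjectiveSpecialLinearGroup (Fin 2) F) := Quotient.finite _
  obtain ⟨i, hi⟩ := hH
  have hHp : IsPGroup p' H := IsPGroup.of_card hi
  have hq2 : 2 ≤ Fintype.card F := Fintype.one_lt_card
  have hq0 : Fintype.card F ≠ 0 := by omega
  have hqm1 : Fintype.card F - 1 ≠ 0 := by omega
  have hqp1 : Fintype.card F + 1 ≠ 0 := by omega
  have hpq : ¬ p' ∣ Fintype.card F := by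
    rw [hF]
    intro hdvd'
    exact hne ((Nat.prime_dvd_prime_iff_eq hp' hp).mp (hp'.dvd_of_dvd_pow hdvd'))
  have hG0 : Nat.card (Matrix.ProjectiveSpecialLinearGroup (Fin 2) F) ≠ 0 := Nat.card_pos.ne'
  have hM0 : (Fintype.card F - 1) * (Fintype.card F + 1) ≠ 0 := Nat.mul_ne_zero hqm1 hqp1
  have hSL' : Nat.card (Matrix.SpecialLinearGroup (Fin 2) F)
      = Fintype.card F * ((Fintype.card F - 1) * (Fintype.card F + 1)) := by
    rw [Pron3.card_SL]; ring
  have hSL0 : Nat.card (Matrix.SpecialLinearGroup (Fin 2) F) ≠ 0 := by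
    rw [hSL']; exact Nat.mul_ne_zero hq0 hM0
  have hdvdSL : Nat.card (Matrix.ProjectiveSpecialLinearGroup (Fin 2) F)
      ∣ Nat.card (Matrix.SpecialLinearGroup (Fin 2) F) :=
    ⟨_, Subgroup.card_eq_card_quotient_mul_card_subgroup
      (Subgroup.center (Matrix.SpecialLinearGroup (Fin 2) F))⟩
  have hv : (Nat.card (Matrix.ProjectiveSpecialLinearGroup (Fin 2) F)).factorization p'
      ≤ ((Fintype.card F - 1) * (Fintype.card F + 1)).factorization p' := by
    have h1 := PronGlue.factorization_le_of_dvd p' hG0 hSL0 hdvdSL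
    have h2 : (Nat.card (Matrix.SpecialLinearGroup (Fin 2) F)).factorization p'
        = ((Fintype.card F - 1) * (Fintype.card F + 1)).factorization p' := by
      rw [hSL', Nat.factorization_mul hq0 hM0, Finsupp.add_apply,
        Nat.factorization_eq_zero_of_not_dvd hpq, zero_add]
    exact h2 ▸ h1
  have hC : ∃ C : Subgroup (Matrix.ProjectiveSpecialLinearGroup (Fin 2) F), IsCyclic C ∧
      p' ^ (Nat.card (Matrix.ProjectiveSpecialLinearGroup (Fin 2) F)).factorization p'
        ∣ Nat.card C := by
    by_cases hA : p' ∣ Fintype.card F - 1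
    · obtain ⟨C, hCc, k, hk2, hck⟩ := Pron4.exists_cyclic_subgroup_split F
      refine ⟨C, hCc, ?_⟩
      have hnk : ¬ p' ∣ k := fun h =>
        hne2 ((Nat.prime_dvd_prime_iff_eq hp' Nat.prime_two).mp (h.trans hk2))
      have hnq1 : ¬ p' ∣ Fintype.card F + 1 := by
        intro hB
        have h2 : p' ∣ 2 := by
          have := Nat.dvd_sub hB hA
          rwa [(by omega : Fintype.card F + 1 - (Fintype.card F - 1) = 2)] at this
        exact hne2 ((Nat.prime_dvd_prime_iff_eq hp' Nat.prime_two).mp h2)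
      have hq1fact : ((Fintype.card F - 1) * (Fintype.card F + 1)).factorization p'
          = (Fintype.card F - 1).factorization p' := by
        rw [Nat.factorization_mul hqm1 hqp1, Finsupp.add_apply,
          Nat.factorization_eq_zero_of_not_dvd hnq1, add_zero]
      have hdc := PronGlue.pow_factorization_dvd_of_mul_eq hqm1 hck hnk
      exact dvd_trans (pow_dvd_pow p' (le_trans hv (le_of_eq hq1fact))) hdc
    · obtain ⟨C, hCc, k1, k2, hk12, hk2q, hck⟩ :=
        Pron5B.exists_cyclic_subgroup_nonsplit (F := F)
      refine ⟨C, hCc, ?_⟩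
      have hM : Fintype.card F ^ 2 - 1 = (Fintype.card F - 1) * (Fintype.card F + 1) := by
        have h1 : 1 ≤ Fintype.card F ^ 2 := by nlinarith
        zify [h1, (by omega : 1 ≤ Fintype.card F)]
        ring
      rw [hM] at hck
      have hnk : ¬ p' ∣ k1 * k2 := by
        intro h
        rcases (Nat.Prime.dvd_mul hp').mp h with h | h
        · exact hne2 ((Nat.prime_dvd_prime_iff_eq hp' Nat.prime_two).mp (h.trans hk12))
        · exact hA (h.trans hk2q)
      have hdc := PronGlue.pow_factorization_dvd_of_mul_eq hM0 hck hnk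
      exact dvd_trans (pow_dvd_pow p' hv) hdc
  obtain ⟨C, hCc, hCdvd⟩ := hC
  exact Pron.pronormal_of_cyclic_sylow
    (PronGlue.cyclic_sylow_of_cyclic_subgroup hCc hCdvd) hHp
end

section
/- Let G be a finite group, p a prime, and P a p-subgroup of G that is pronormal in G. Let H be a subgroup of G containing P. If H is a normal subgroup of the normalizer N_G(P) (in particular H ≤ N_G(P)), then H is pronormal in G. -/
namespace Subgroup

lemma mem_conjugate' {G : Type*} [Group G] {H : Subgroup G} {g x : G} :
    x ∈ H.conjugate g ↔ g * x * g⁻¹ ∈ H := by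
  constructor
  · rintro ⟨h, hh, rfl⟩
    simpa [mul_assoc] using hh
  · intro h
    exact ⟨_, h, by simp [mul_assoc]⟩

lemma conjugate_conjugate' {G : Type*} [Group G] (H : Subgroup G) (a b : G) :
    (H.conjugate a).conjugate b = H.conjugate (a * b) := by
  ext x
  simp only [mem_conjugate']
  rw [show a * (b * x * b⁻¹) * a⁻¹ = (a * b) * x * (a * b)⁻¹ by group]

lemma conjugate_one' {G : Type*} [Group G] (H : Subgroup G) : H.conjugate 1 = H := by
  ext x; simp [mem_conjugate']

lemma conjugate_mono' {G : Type*} [Group G] {H K : Subgroup G} (h : H ≤ K) (g : G) :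
    H.conjugate g ≤ K.conjugate g :=
  Subgroup.map_mono h

end Subgroup

theorem stmt15 (G : Type*) [Group G] [Finite G] (p : ℕ) (hp : p.Prime)
    (P H : Subgroup G) (hPp : IsPGroup p P) (hPpro : IsPronormal P)
    (hPH : P ≤ H) (hHN : H ≤ Subgroup.normalizer (P : Set G))
    (hnorm : (H.subgroupOf (Subgroup.normalizer (P : Set G))).Normal) :
    IsPronormal H := by
  intro g
  obtain ⟨x, hx, hPx⟩ := hPpro g
  refine ⟨x, sup_le_sup hPH (Subgroup.conjugate_mono' hPH g) hx, ?_⟩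
  have hP1 : P.conjugate (x * g⁻¹) = P := by
    rw [← Subgroup.conjugate_conjugate', hPx, Subgroup.conjugate_conjugate',
      mul_inv_cancel, Subgroup.conjugate_one']
  have hxg : x * g⁻¹ ∈ Subgroup.normalizer (P : Set G) := by
    rw [Subgroup.mem_normalizer_iff]
    intro h
    rw [← Subgroup.mem_conjugate', hP1]
  -- conjugation by an element of N(P) fixes H
  have hH : H.conjugate (x * g⁻¹) = H := by
    ext y
    rw [Subgroup.mem_conjugate']
    set n : G := x * g⁻¹
    constructor
    · intro hy
      have hyN : n * y * n⁻¹ ∈ Subgroup.normalizer (P : Set G) := hHN hy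
      have hy' : (⟨n * y * n⁻¹, hyN⟩ : Subgroup.normalizer (P : Set G)) ∈ H.subgroupOf (Subgroup.normalizer (P : Set G)) := by
        simpa [Subgroup.mem_subgroupOf] using hy
      have := hnorm.conj_mem _ hy' (⟨n, hxg⟩⁻¹ : Subgroup.normalizer (P : Set G))
      have h2 : (⟨n, hxg⟩ : Subgroup.normalizer (P : Set G))⁻¹ * ⟨n * y * n⁻¹, hyN⟩ * (⟨n, hxg⟩ : Subgroup.normalizer (P : Set G))⁻¹⁻¹
          ∈ H.subgroupOf (Subgroup.normalizer (P : Set G)) := this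
      have h3 : n⁻¹ * (n * y * n⁻¹) * n ∈ H := by
        simpa [Subgroup.mem_subgroupOf] using h2
      simpa [mul_assoc] using h3
    · intro hy
      have hyN : y ∈ Subgroup.normalizer (P : Set G) := hHN hy
      have hy' : (⟨y, hyN⟩ : Subgroup.normalizer (P : Set G)) ∈ H.subgroupOf (Subgroup.normalizer (P : Set G)) := by
        simpa [Subgroup.mem_subgroupOf] using hy
      have := hnorm.conj_mem _ hy' (⟨n, hxg⟩ : Subgroup.normalizer (P : Set G))
      simpa [Subgroup.mem_subgroupOf] using this
  calc H.conjugate x = (H.conjugate (x * g⁻¹)).conjugate g := by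
        rw [Subgroup.conjugate_conjugate', inv_mul_cancel_right]
    _ = H.conjugate g := by rw [hH]
end
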